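/- Under the same hypotheses (X'' = -∂V₁/∂X, Y'' = -∂V₁/∂Y with V₁ = k/(b₁Y - b₂X)²), the quantity I₃₁(T) = b₁(-TX'(T) + X(T)) + b₂(-TY'(T) + Y(T)) is a first integral. -/

import Mathlib

/-- The time-dependent Noether integral I₃₁ = b₁(-TX' + X) + b₂(-TY' + Y) is a
first integral for the potential V₁ = k/(b₁Y - b₂X)². -/
theorem noether_integral_I31_V1
    (k b₁ b₂ : ℝ) (X Y X' Y' : ℝ → ℝ)
    (hne : ∀ T, b₁ * Y T - b₂ * X T ≠ 0)
    (hX : ∀ T, HasDerivAt X (X' T) T)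
    (hY : ∀ T, HasDerivAt Y (Y' T) T)
    (hX' : ∀ T, HasDerivAt X'
      (-deriv (fun s => k / (b₁ * Y T - b₂ * s)^2) (X T)) T)
    (hY' : ∀ T, HasDerivAt Y'
      (-deriv (fun s => k / (b₁ * s - b₂ * X T)^2) (Y T)) T) :
    ∀ T, deriv (fun s => b₁ * (-s * X' s + X s) + b₂ * (-s * Y' s + Y s)) T = 0 := by
  intro T
  set D : ℝ := b₁ * Y T - b₂ * X T with hDdef
  have hD : D ≠ 0 := hne T
  -- compute the inner derivatives
  have hdX : deriv (fun s => k / (b₁ * Y T - b₂ * s)^2) (X T) = 2 * k * b₂ / D^3 := by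
    have hu : HasDerivAt (fun s => (b₁ * Y T - b₂ * s)^2) (2 * D ^ 1 * (-b₂)) (X T) := by
      have h1 : HasDerivAt (fun s : ℝ => b₁ * Y T - b₂ * s) (0 - b₂ * 1) (X T) :=
        (hasDerivAt_const _ _).sub ((hasDerivAt_id _).const_mul b₂)
      have := h1.fun_pow 2
      simpa [hDdef] using this
    have hu2 : (b₁ * Y T - b₂ * X T)^2 ≠ 0 := pow_ne_zero _ hD
    have h := ((hasDerivAt_const (X T) k).fun_div hu hu2).deriv
    rw [h]
    rw [← hDdef]
    field_simp
    ring
  have hdY : deriv (fun s => k / (b₁ * s - b₂ * X T)^2) (Y T) = -(2 * k * b₁) / D^3 := by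
    have hu : HasDerivAt (fun s => (b₁ * s - b₂ * X T)^2) (2 * D ^ 1 * b₁) (Y T) := by
      have h1 : HasDerivAt (fun s : ℝ => b₁ * s - b₂ * X T) (b₁ * 1 - 0) (Y T) :=
        (((hasDerivAt_id _).const_mul b₁)).sub (hasDerivAt_const _ _)
      have := h1.fun_pow 2
      simpa [hDdef] using this
    have hu2 : (b₁ * Y T - b₂ * X T)^2 ≠ 0 := pow_ne_zero _ hD
    have h := ((hasDerivAt_const (Y T) k).fun_div hu hu2).deriv
    rw [h]
    rw [← hDdef]
    field_simp
    ring
  have hF : HasDerivAt (fun s => b₁ * (-s * X' s + X s) + b₂ * (-s * Y' s + Y s))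
      (b₁ * ((-1 * X' T + -T * -deriv (fun s => k / (b₁ * Y T - b₂ * s)^2) (X T)) + X' T)
        + b₂ * ((-1 * Y' T + -T * -deriv (fun s => k / (b₁ * s - b₂ * X T)^2) (Y T)) + Y' T)) T := by
    exact ((((hasDerivAt_id T).neg.mul (hX' T)).add (hX T)).const_mul b₁).add
      ((((hasDerivAt_id T).neg.mul (hY' T)).add (hY T)).const_mul b₂)
  rw [hF.deriv, hdX, hdY]
  field_simp
  ring
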